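/- arXiv:2106.15961 — 2 statements merged into one kernel-verified Lean document; each statement's English description precedes it below -/
import Mathlib

section
/- In a tree equilibrium graph G of the max-distance network creation game with n ≥ 3 vertices, the diameter satisfies diam(G) ≤ 2α + 3. -/
/-!
Max-distance network creation game (Demaine et al.):
`n` agents, agent `v` buys edges to the agents in `s v`, each at cost `α`.
The resulting graph has an edge `(u,v)` iff `u ∈ s v` or `v ∈ s u`.
Agent `v`'s cost is `α * |s v|` plus its eccentricity (max distance, `⊤` if
disconnected). A profile is a (pure Nash) equilibrium if no agent can strictly
decrease its cost by unilaterally changing its edge set.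
-/

open SimpleGraph
open scoped ENNReal

namespace NCG

/-- The undirected graph created by strategy profile `s`. -/
def graph (n : ℕ) (s : Fin n → Finset (Fin n)) : SimpleGraph (Fin n) :=
  SimpleGraph.fromRel (fun u v => v ∈ s u)

/-- Eccentricity `D(v) = max_u d_G(v,u)`, valued in `ℕ∞`. -/
noncomputable def ecc {n : ℕ} (G : SimpleGraph (Fin n)) (v : Fin n) : ℕ∞ :=
  ⨆ u, G.edist v u

/-- The cost of agent `v` under profile `s`: `α·|s v| + D(v)` (infinite if the
graph is disconnected). -/
noncomputable def cost {n : ℕ} (α : ℝ) (s : Fin n → Finset (Fin n)) (v : Fin n) : ℝ≥0∞ :=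
  ENNReal.ofReal α * (s v).card + (ecc (graph n s) v : ℝ≥0∞)

/-- Pure Nash equilibrium: no agent can strictly decrease its cost by a
unilateral deviation. -/
def IsEquilibrium {n : ℕ} (α : ℝ) (s : Fin n → Finset (Fin n)) : Prop :=
  ∀ (v : Fin n) (t : Finset (Fin n)), cost α s v ≤ cost α (Function.update s v t) v

/-- Radius `rad(G) = min_v D(v)`. -/
noncomputable def radius {n : ℕ} (G : SimpleGraph (Fin n)) : ℕ∞ :=
  ⨅ v, ecc G v

/-- Diameter `diam(G) = max_v D(v)`. -/
noncomputable def diam {n : ℕ} (G : SimpleGraph (Fin n)) : ℕ∞ :=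
  ⨆ v, ecc G v

/-- Interpret an extended natural number as a real number (`⊤ ↦ 0`). -/
noncomputable def entoR (x : ℕ∞) : ℝ := ((x : ℝ≥0∞)).toReal

/-- `T` is a shortest path tree of `G` rooted at `b`: a spanning tree of `G`
preserving all distances from `b`. -/
def IsSPT {n : ℕ} (G T : SimpleGraph (Fin n)) (b : Fin n) : Prop :=
  T ≤ G ∧ T.IsTree ∧ ∀ v, T.edist b v = G.edist b v

/-- `p` is the parent of `a` in the tree `T` rooted at `b`. -/
def IsParent {n : ℕ} (T : SimpleGraph (Fin n)) (b a p : Fin n) : Prop :=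
  T.Adj a p ∧ T.edist b p + 1 = T.edist b a

/-- The vertex set `B` (with more than two vertices) induces a biconnected
subgraph: removing any single vertex leaves it connected. -/
def IsBiconnected {n : ℕ} (G : SimpleGraph (Fin n)) (B : Finset (Fin n)) : Prop :=
  2 < B.card ∧ ∀ v ∈ B, (G.induce ((B : Set (Fin n)) \ {v})).Connected

/-- `B` is (the vertex set of) a biconnected component of `G`: a maximal
biconnected subgraph with more than two vertices. -/
def IsBicomp {n : ℕ} (G : SimpleGraph (Fin n)) (B : Finset (Fin n)) : Prop :=
  IsBiconnected G B ∧ ∀ B' : Finset (Fin n), B ⊆ B' → IsBiconnected G B' → B' = B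

/-- The induced subgraph of `G` on the vertex set `B`. -/
def Hgraph {n : ℕ} (G : SimpleGraph (Fin n)) (B : Finset (Fin n)) :
    SimpleGraph ((B : Set (Fin n))) :=
  G.induce (B : Set (Fin n))

/-- The degree of `v` inside the induced subgraph on `B`. -/
noncomputable def degH {n : ℕ} (G : SimpleGraph (Fin n)) (B : Finset (Fin n)) (v : Fin n) : ℕ :=
  {u : Fin n | u ∈ B ∧ G.Adj v u}.ncard

/-- A min cycle: a cycle whose internal (cycle) distances agree with the
distances in `G`, i.e. an isometric cycle. -/
def IsMinCycle {n : ℕ} (G : SimpleGraph (Fin n)) {v : Fin n} (c : G.Walk v v) : Prop :=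
  c.IsCycle ∧ ∀ x₁ ∈ c.support, ∀ x₂ ∈ c.support,
    c.toSubgraph.spanningCoe.edist x₁ x₂ = G.edist x₁ x₂

/-- A directed cycle: going around the cycle, each vertex buys the edge to its
successor (in one of the two cyclic orientations). -/
def IsDirectedCycle {n : ℕ} (s : Fin n → Finset (Fin n)) {v : Fin n}
    (c : (graph n s).Walk v v) : Prop :=
  (∀ d ∈ c.darts, d.toProd.2 ∈ s d.toProd.1) ∨ (∀ d ∈ c.darts, d.toProd.1 ∈ s d.toProd.2)

/-- A shopping vertex of the biconnected component `B` w.r.t. the shortest path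
tree `T`: a vertex of `B` buying an edge of the component that is not in `T`. -/
def IsShopping {n : ℕ} (s : Fin n → Finset (Fin n)) (T : SimpleGraph (Fin n))
    (B : Finset (Fin n)) (u : Fin n) : Prop :=
  u ∈ B ∧ ∃ w ∈ B, w ∈ s u ∧ (graph n s).Adj u w ∧ ¬ T.Adj u w

/-- The social cost of profile `s`. -/
noncomputable def socialCost {n : ℕ} (α : ℝ) (s : Fin n → Finset (Fin n)) : ℝ≥0∞ :=
  ∑ v, cost α s v

end NCG

open NCG

section aux
variable {V : Type*} [DecidableEq V] {G : SimpleGraph V}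

omit [DecidableEq V] in
lemma walk_split {a w : V} (p : G.Walk a w) (j : ℕ) (hj : j ≤ p.length) :
    ∃ m, ∃ _q : G.Walk a m, ∃ _r : G.Walk m w, _q.length = j ∧ _r.length = p.length - j := by
  induction p generalizing j with
  | nil => exact ⟨_, .nil, .nil, by simp at hj ⊢; omega, by simp⟩
  | @cons u b w h p' ih =>
    cases j with
    | zero => exact ⟨u, .nil, .cons h p', by simp, by simp⟩
    | succ j =>
      obtain ⟨m, q, r, hq, hr⟩ := ih j (by simpa using hj)
      exact ⟨m, q.cons h, r, by simp [hq], by simpa using hr⟩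

lemma dist_add_of_through (hconn : G.Connected) {a m x : V}
    (h : ∀ W : G.Walk a x, m ∈ W.support) :
    G.dist a m + G.dist m x ≤ G.dist a x := by
  obtain ⟨W, hW⟩ := (hconn a x).exists_walk_length_eq_dist
  have hm := h W
  have hs := congrArg Walk.length (W.take_spec hm)
  rw [Walk.length_append] at hs
  calc G.dist a m + G.dist m x ≤ (W.takeUntil m hm).length + (W.dropUntil m hm).length :=
        Nat.add_le_add (dist_le _) (dist_le _)
    _ = W.length := hs
    _ = G.dist a x := hW

lemma tree_sep (htree : G.IsTree) {a m w : V}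
    (hsum : G.dist a m + G.dist m w = G.dist a w) (x : V) :
    (∀ W : G.Walk a x, m ∈ W.support) ∨ (∀ W : G.Walk w x, m ∈ W.support) := by
  have hconn := htree.isConnected
  obtain ⟨Q1, hQ1⟩ := (hconn a m).exists_walk_length_eq_dist
  obtain ⟨Q2, hQ2⟩ := (hconn m w).exists_walk_length_eq_dist
  set W := Q1.append Q2 with hWdef
  have hWlen : W.length = G.dist a w := by
    rw [Walk.length_append, hQ1, hQ2, hsum]
  have hWpath : W.IsPath := by
    have h1 : W.length ≤ W.bypass.length := by
      rw [hWlen]; exact dist_le _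
    have := W.bypass_eq_self_of_length_le h1
    rw [← this]; exact W.bypass_isPath
  have hmW : m ∈ W.support := by
    rw [Walk.mem_support_append_iff]; exact Or.inr Q2.start_mem_support
  by_contra hcon
  push_neg at hcon
  obtain ⟨⟨Wa, hma⟩, ⟨Wb, hmb⟩⟩ := hcon
  set R := (Wa.append Wb.reverse).bypass with hRdef
  have hRW : R = W := by
    obtain ⟨p0, -, hup⟩ := htree.existsUnique_path a w
    rw [hup R (Walk.bypass_isPath _), hup W hWpath]
  have : m ∈ (Wa.append Wb.reverse).support :=
    (Wa.append Wb.reverse).support_bypass_subset (by rw [← hRdef, hRW]; exact hmW)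
  rw [Walk.mem_support_append_iff, Walk.support_reverse, List.mem_reverse] at this
  exact this.elim hma hmb
end aux


/-- a tree equilibrium graph on `n ≥ 3` vertices has diameter at
most `2α + 3`. -/
theorem tree_equilibrium_diam (n : ℕ) (hn : 3 ≤ n) (α : ℝ) (hα : 0 < α)
    (s : Fin n → Finset (Fin n)) (hs : IsEquilibrium α s)
    (htree : (graph n s).IsTree) :
    entoR (NCG.diam (graph n s)) ≤ 2 * α + 3 := by
  classical
  set G := graph n s with hG
  have hconn := htree.isConnected
  have hne : Nonempty (Fin n) := ⟨⟨0, by omega⟩⟩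
  obtain ⟨a, ha⟩ := Finite.exists_max (fun v => ecc G v)
  have hdiam : NCG.diam G = ecc G a := le_antisymm (iSup_le ha) (le_iSup _ a)
  obtain ⟨w, hw⟩ := Finite.exists_max (fun u => G.edist a u)
  have hecca : ecc G a = G.edist a w := le_antisymm (iSup_le hw) (le_iSup _ w)
  have hcast : ∀ u v : Fin n, (G.dist u v : ℕ∞) = G.edist u v := fun u v =>
    ENat.coe_toNat (edist_ne_top_iff_reachable.mpr (hconn u v))
  set D := G.dist a w with hD
  have hDcast : (D : ℕ∞) = G.edist a w := hcast a w
  -- D ≥ 1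
  have hab : (⟨0, by omega⟩ : Fin n) ≠ ⟨1, by omega⟩ := by simp [Fin.ext_iff]
  obtain ⟨b, hb⟩ : ∃ b, a ≠ b := by
    rcases eq_or_ne a ⟨0, by omega⟩ with h | h
    · exact ⟨⟨1, by omega⟩, by rw [h]; exact hab⟩
    · exact ⟨_, h⟩
  have hD1 : 1 ≤ D := by
    have h1 : (1:ℕ∞) ≤ G.edist a b :=
      Order.one_le_iff_pos.mpr (G.edist_pos_of_ne hb)
    have := h1.trans (hw b)
    rw [← hDcast] at this; exact_mod_cast this
  set k := (D + 1) / 2 with hk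
  have hkD : k ≤ D := by omega
  have hk1 : 1 ≤ k := by omega
  -- midpoint
  obtain ⟨p, hp⟩ := (hconn a w).exists_walk_length_eq_dist
  obtain ⟨m, q, r, hq, hr⟩ := walk_split p k (by rw [hp]; exact hkD)
  have ham' : G.dist a m ≤ k := hq ▸ dist_le q
  have hmw' : G.dist m w ≤ D - k := by rw [hp] at hr; exact hr ▸ dist_le r
  have htri : D ≤ G.dist a m + G.dist m w := hconn.dist_triangle
  have ham : G.dist a m = k := by omega
  have hmw : G.dist m w = D - k := by omega
  have hsum : G.dist a m + G.dist m w = G.dist a w := by omega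
  -- all distances from a and w are at most D
  have hda : ∀ x, G.dist a x ≤ D := by
    intro x
    have : G.edist a x ≤ G.edist a w := hw x
    rw [← hcast a x, ← hDcast] at this; exact_mod_cast this
  have hdw : ∀ x, G.dist w x ≤ D := by
    intro x
    have h1 : G.edist w x ≤ ecc G w := le_iSup _ x
    have h2 : ecc G w ≤ ecc G a := ha w
    have := (h1.trans h2).trans_eq hecca
    rw [← hcast w x, ← hDcast] at this; exact_mod_cast this
  -- eccentricity of m is at most k
  have hmx : ∀ x, G.dist m x ≤ k := by
    intro x
    rcases tree_sep htree hsum x with h | h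
    · have := dist_add_of_through hconn h
      have := hda x; omega
    · have h2 : G.dist w m + G.dist m x ≤ G.dist w x :=
        dist_add_of_through hconn h
      rw [SimpleGraph.dist_comm] at h2
      have := hdw x; omega
  have heccm : ecc G m ≤ (k : ℕ∞) := by
    refine iSup_le fun x => ?_
    rw [← hcast m x]; exact_mod_cast hmx x
  have hma : a ≠ m := by
    intro h; rw [← h, G.dist_self] at ham; omega
  -- deviation
  set t : Finset (Fin n) := insert m (s a) with ht
  set s' := Function.update s a t with hs'
  set G' := graph n s' with hG'
  have hle : G ≤ G' := by
    intro u v huv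
    rw [hG, NCG.graph, fromRel_adj] at huv
    rw [hG', NCG.graph, fromRel_adj]
    refine ⟨huv.1, ?_⟩
    have key : ∀ x y : Fin n, y ∈ s x → y ∈ s' x := by
      intro x y hy
      rcases eq_or_ne x a with rfl | hx
      · rw [hs', Function.update_self, ht]; exact Finset.mem_insert_of_mem hy
      · rw [hs', Function.update_of_ne hx]; exact hy
    exact huv.2.imp (key u v) (key v u)
  have hadj : G'.Adj a m := by
    rw [hG', NCG.graph, fromRel_adj]
    exact ⟨hma, Or.inl (by rw [hs', Function.update_self, ht]; exact Finset.mem_insert_self _ _)⟩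
  have hecc' : ecc G' a ≤ (k : ℕ∞) + 1 := by
    refine iSup_le fun x => ?_
    calc G'.edist a x ≤ G'.edist a m + G'.edist m x := SimpleGraph.edist_triangle
      _ ≤ 1 + G.edist m x :=
          add_le_add (le_of_eq (edist_eq_one_iff_adj.mpr hadj)) (edist_anti hle)
      _ ≤ 1 + (k : ℕ∞) :=
          add_le_add (le_refl 1) ((le_iSup (fun u => G.edist m u) x).trans heccm)
      _ = (k : ℕ∞) + 1 := add_comm _ _
  -- equilibrium inequality
  have heq := hs a t
  rw [NCG.cost, NCG.cost, ← hG, ← hs', ← hG'] at heq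
  have hs'a : s' a = t := by rw [hs']; exact Function.update_self a t s
  rw [hs'a] at heq
  have heccaD : ecc G a = (D : ℕ∞) := by rw [hecca, hDcast]
  have hcard : (t.card : ℝ≥0∞) ≤ (s a).card + 1 := by
    exact_mod_cast (Finset.card_insert_le m (s a))
  set A := ENNReal.ofReal α with hA
  have hAc : A * (s a).card ≠ ⊤ :=
    ENNReal.mul_ne_top ENNReal.ofReal_ne_top (ENNReal.natCast_ne_top _)
  have hkey : ((D : ℕ∞) : ℝ≥0∞) ≤ A + (((k : ℕ∞) + 1 : ℕ∞) : ℝ≥0∞) := by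
    have hrhs : A * t.card + (ecc G' a : ℝ≥0∞) ≤
        A * (s a).card + (A + (((k : ℕ∞) + 1 : ℕ∞) : ℝ≥0∞)) := by
      have h1 : A * (t.card : ℝ≥0∞) ≤ A * ((s a).card + 1) := by gcongr
      have h2 : (ecc G' a : ℝ≥0∞) ≤ (((k : ℕ∞) + 1 : ℕ∞) : ℝ≥0∞) := by
        exact_mod_cast ENat.toENNReal_le.mpr hecc'
      calc A * t.card + (ecc G' a : ℝ≥0∞)
          ≤ A * ((s a).card + 1) + (((k : ℕ∞) + 1 : ℕ∞) : ℝ≥0∞) := add_le_add h1 h2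
        _ = A * (s a).card + (A + (((k : ℕ∞) + 1 : ℕ∞) : ℝ≥0∞)) := by ring
    have hchain : A * (s a).card + ((D : ℕ∞) : ℝ≥0∞) ≤
        A * (s a).card + (A + (((k : ℕ∞) + 1 : ℕ∞) : ℝ≥0∞)) := by
      rw [← heccaD]; exact heq.trans hrhs
    exact (ENNReal.add_le_add_iff_left hAc).mp hchain
  -- convert to reals
  have hkR : ((D : ℝ)) ≤ α + ((k : ℝ) + 1) := by
    have h1 : (((D : ℕ∞)) : ℝ≥0∞) = (D : ℝ≥0∞) := by simp
    have h2 : ((((k : ℕ∞) + 1 : ℕ∞)) : ℝ≥0∞) = (k : ℝ≥0∞) + 1 := by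
      push_cast; ring
    rw [h1, h2] at hkey
    have hfin : A + ((k : ℝ≥0∞) + 1) ≠ ⊤ := by
      simp [hA, ENNReal.add_ne_top, ENNReal.natCast_ne_top]
    have := ENNReal.toReal_mono hfin hkey
    simpa [hA, ENNReal.toReal_add, ENNReal.ofReal_ne_top, ENNReal.natCast_ne_top,
      ENNReal.toReal_ofReal hα.le] using this
  have hgoal : entoR (NCG.diam G) = (D : ℝ) := by
    rw [hdiam, heccaD, entoR]; simp
  rw [hgoal]
  have h2k : 2 * k ≤ D + 1 := by omega
  have h2kR : 2 * (k : ℝ) ≤ (D : ℝ) + 1 := by exact_mod_cast h2k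
  linarith
end

section
/- In the max-distance network creation game with n agents and α ≥ 2/(n−2), if every equilibrium graph is a tree, then the price of anarchy is less than 3. -/
/-!
Max-distance network creation game (Demaine et al.):
`n` agents, agent `v` buys edges to the agents in `s v`, each at cost `α`.
The resulting graph has an edge `(u,v)` iff `u ∈ s v` or `v ∈ s u`.
Agent `v`'s cost is `α * |s v|` plus its eccentricity (max distance, `⊤` if
disconnected). A profile is a (pure Nash) equilibrium if no agent can strictly
decrease its cost by unilaterally changing its edge set.
-/

open SimpleGraph
open scoped ENNReal

namespace NCG
open Finset SimpleGraph

variable {n : ℕ}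

lemma graph_adj {s : Fin n → Finset (Fin n)} {u v : Fin n} :
    (graph n s).Adj u v ↔ u ≠ v ∧ (v ∈ s u ∨ u ∈ s v) := by
  simp [graph]

lemma edist_eq_dist' {G : SimpleGraph (Fin n)} {u v : Fin n} (h : G.Reachable u v) :
    G.edist u v = (G.dist u v : ℕ∞) := by
  rw [SimpleGraph.dist]
  exact (ENat.coe_toNat (SimpleGraph.edist_ne_top_iff_reachable.2 h)).symm

/-- natural-valued eccentricity -/
noncomputable def natEcc (G : SimpleGraph (Fin n)) (v : Fin n) : ℕ :=
  Finset.univ.sup (fun u => G.dist v u)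

lemma dist_le_natEcc {G : SimpleGraph (Fin n)} (v u : Fin n) :
    G.dist v u ≤ natEcc G v := Finset.le_sup (mem_univ u)

lemma natEcc_le {G : SimpleGraph (Fin n)} {v : Fin n} {m : ℕ} (h : ∀ u, G.dist v u ≤ m) :
    natEcc G v ≤ m := Finset.sup_le fun u _ => h u

lemma ecc_eq_natEcc {G : SimpleGraph (Fin n)} (hc : G.Connected) (v : Fin n) :
    ecc G v = (natEcc G v : ℕ∞) := by
  apply le_antisymm
  · apply iSup_le; intro u
    rw [edist_eq_dist' (hc v u)]
    exact_mod_cast dist_le_natEcc v u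
  · obtain ⟨u, -, hu⟩ := Finset.exists_mem_eq_sup (univ : Finset (Fin n))
      (univ_nonempty_iff.2 (hc.nonempty)) (fun u => G.dist v u)
    calc ((natEcc G v : ℕ∞)) = ((G.dist v u : ℕ)) := by rw [natEcc, hu]
    _ = G.edist v u := (edist_eq_dist' (hc v u)).symm
    _ ≤ ecc G v := le_iSup _ u

lemma dist_lt_card {G : SimpleGraph (Fin n)} (hc : G.Connected) (v u : Fin n) :
    G.dist v u < n := by
  obtain ⟨p, hp, hl⟩ := hc.exists_path_of_dist v u
  have := hp.length_lt
  rw [Fintype.card_fin] at this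
  omega

lemma natEcc_lt_card {G : SimpleGraph (Fin n)} (hc : G.Connected) (v : Fin n) :
    natEcc G v < n := by
  have hn : 0 < n := Fin.pos hc.nonempty.some
  have h : natEcc G v ≤ n - 1 :=
    natEcc_le fun u => by have := dist_lt_card hc v u; omega
  omega

end NCG
namespace NCG
open Finset SimpleGraph

variable {n : ℕ}

lemma dist_getVert_le {G : SimpleGraph (Fin n)} (hc : G.Connected) :
    ∀ {u w : Fin n} (p : G.Walk u w) (i : ℕ), G.dist u (p.getVert i) ≤ i := by
  intro u w p
  induction p with
  | nil => intro i; simp [SimpleGraph.Walk.getVert, SimpleGraph.dist_self]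
  | @cons u v w h q ih =>
    intro i
    cases i with
    | zero => simp
    | succ i =>
      rw [SimpleGraph.Walk.getVert_cons_succ]
      calc G.dist u (q.getVert i) ≤ G.dist u v + G.dist v (q.getVert i) := hc.dist_triangle
      _ ≤ 1 + i := by
          have h1 : G.dist u v ≤ 1 := by
            have := SimpleGraph.dist_le h.toWalk
            simpa using this
          exact Nat.add_le_add h1 (ih i)
      _ = i + 1 := Nat.add_comm _ _

/-- In a tree on ≥ 2 vertices, there is a vertex whose eccentricity is at most
`(d+1)/2` where `d` is the diameter. -/
lemma exists_center {G : SimpleGraph (Fin n)} (hn : 2 ≤ n) (hG : G.IsTree) :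
    ∃ b : Fin n, 2 * natEcc G b ≤ (Finset.univ.sup fun u => natEcc G u) + 1 := by
  classical
  have hc : G.Connected := hG.isConnected
  set d := (Finset.univ.sup fun u => natEcc G u) with hd_def
  have hdle : ∀ x y : Fin n, G.dist x y ≤ d :=
    fun x y => le_trans (dist_le_natEcc x y) (Finset.le_sup (mem_univ x))
  -- d ≥ 1
  have hd1 : 1 ≤ d := by
    have h2 : ∃ x y : Fin n, x ≠ y := by
      refine ⟨⟨0, by omega⟩, ⟨1, by omega⟩, by simp [Fin.ext_iff]⟩
    obtain ⟨x, y, hxy⟩ := h2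
    have := hc.pos_dist_of_ne hxy
    exact le_trans this (hdle x y)
  obtain ⟨u, -, hu⟩ := Finset.exists_mem_eq_sup (univ : Finset (Fin n))
    (univ_nonempty_iff.2 hc.nonempty) (fun u => natEcc G u)
  obtain ⟨w, -, hw⟩ := Finset.exists_mem_eq_sup (univ : Finset (Fin n))
    (univ_nonempty_iff.2 hc.nonempty) (fun x => G.dist u x)
  have huw : G.dist u w = d := by rw [hd_def, hu, natEcc, hw]
  obtain ⟨p, hp, hpl⟩ := hc.exists_path_of_dist u w
  set a := (d + 1) / 2 with ha_def
  have had : a ≤ d := by omega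
  set m := p.getVert a with hm_def
  have h1 : G.dist u m ≤ a := dist_getVert_le hc p a
  have h2 : G.dist w m ≤ d - a := by
    have := dist_getVert_le hc p.reverse (d - a)
    rwa [SimpleGraph.Walk.getVert_reverse, hpl, huw,
      show d - (d - a) = a by omega] at this
  have htri : d ≤ G.dist u m + G.dist m w := by
    rw [← huw]; exact hc.dist_triangle
  have hwm : G.dist m w = G.dist w m := SimpleGraph.dist_comm
  have h1' : G.dist u m = a := by omega
  have h2' : G.dist m w = d - a := by omega
  have hmp : m ∈ p.support := by
    rw [SimpleGraph.Walk.mem_support_iff_exists_getVert]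
    exact ⟨a, rfl, by rw [hpl, huw]; omega⟩
  refine ⟨m, ?_⟩
  have key : ∀ x, G.dist m x ≤ a := by
    intro x
    obtain ⟨q1, hq1, hq1l⟩ := hc.exists_path_of_dist u x
    obtain ⟨q2, hq2, hq2l⟩ := hc.exists_path_of_dist x w
    have hsplit : m ∈ q1.support ∨ m ∈ q2.support := by
      have hcp : ((q1.append q2).bypass).IsPath := SimpleGraph.Walk.bypass_isPath _
      obtain ⟨P0, hP0, hP0u⟩ := hG.existsUnique_path u w
      have e1 : p = P0 := hP0u p hp
      have e2 : (q1.append q2).bypass = P0 := hP0u _ hcp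
      have : m ∈ ((q1.append q2).bypass).support := by rw [e2, ← e1]; exact hmp
      have := SimpleGraph.Walk.support_bypass_subset _ this
      rwa [SimpleGraph.Walk.mem_support_append_iff] at this
    rcases hsplit with hm1 | hm2
    · -- m on shortest path u → x
      have hsp : (q1.takeUntil m hm1).length + (q1.dropUntil m hm1).length = q1.length := by
        have := congrArg SimpleGraph.Walk.length (q1.take_spec hm1)
        rwa [SimpleGraph.Walk.length_append] at this
      have hA : G.dist u m ≤ (q1.takeUntil m hm1).length := SimpleGraph.dist_le _
      have hB : G.dist m x ≤ (q1.dropUntil m hm1).length := SimpleGraph.dist_le _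
      have hux : q1.length ≤ d := hq1l ▸ hdle u x
      omega
    · -- m on shortest path x → w
      have hsp : (q2.takeUntil m hm2).length + (q2.dropUntil m hm2).length = q2.length := by
        have := congrArg SimpleGraph.Walk.length (q2.take_spec hm2)
        rwa [SimpleGraph.Walk.length_append] at this
      have hA : G.dist x m ≤ (q2.takeUntil m hm2).length := SimpleGraph.dist_le _
      have hB : G.dist m w ≤ (q2.dropUntil m hm2).length := SimpleGraph.dist_le _
      have hxw : q2.length ≤ d := hq2l ▸ hdle x w
      have hmx : G.dist m x = G.dist x m := SimpleGraph.dist_comm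
      omega
  have : natEcc G m ≤ a := natEcc_le key
  omega

end NCG
namespace NCG
open Finset SimpleGraph

variable {n : ℕ} {s : Fin n → Finset (Fin n)} {α : ℝ}

lemma graph_update_mono (s : Fin n → Finset (Fin n)) (v b : Fin n) :
    graph n s ≤ graph n (Function.update s v (insert b (s v))) := by
  intro x y hxy
  rw [graph_adj] at hxy ⊢
  have hsub : ∀ z, s z ⊆ Function.update s v (insert b (s v)) z := by
    intro z
    rcases eq_or_ne z v with rfl | h
    · simp [Function.update_self, Finset.subset_insert]
    · simp [Function.update_of_ne h]
  exact ⟨hxy.1, hxy.2.imp (fun h => hsub x h) (fun h => hsub y h)⟩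

lemma graph_update_adj (s : Fin n → Finset (Fin n)) {v b : Fin n} (hvb : v ≠ b) :
    (graph n (Function.update s v (insert b (s v)))).Adj v b := by
  rw [graph_adj]
  exact ⟨hvb, Or.inl (by simp [Function.update_self])⟩

lemma ecc_update_le {b v : Fin n} (hc : (graph n s).Connected) (hvb : v ≠ b) :
    ecc (graph n (Function.update s v (insert b (s v)))) v
      ≤ (natEcc (graph n s) b : ℕ∞) + 1 := by
  set G := graph n s
  set G' := graph n (Function.update s v (insert b (s v)))
  apply iSup_le
  intro u
  calc G'.edist v u ≤ G'.edist v b + G'.edist b u := SimpleGraph.edist_triangle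
  _ ≤ 1 + (natEcc G b : ℕ∞) := by
      gcongr
      · exact le_trans (SimpleGraph.edist_le (graph_update_adj s hvb).toWalk) (by simp)
      · calc G'.edist b u ≤ G.edist b u := SimpleGraph.edist_anti (graph_update_mono s v b)
        _ = (G.dist b u : ℕ∞) := edist_eq_dist' (hc b u)
        _ ≤ (natEcc G b : ℕ∞) := by exact_mod_cast dist_le_natEcc b u
  _ = (natEcc G b : ℕ∞) + 1 := add_comm _ _

/-- equilibrium deviation bound: every eccentricity is at most `α + ecc b + 1`. -/
lemma natEcc_le_alpha (hs : IsEquilibrium α s) (hα0 : 0 ≤ α)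
    (hc : (graph n s).Connected) (b v : Fin n) :
    (natEcc (graph n s) v : ℝ) ≤ α + natEcc (graph n s) b + 1 := by
  rcases eq_or_ne v b with rfl | hvb
  · have : (0:ℝ) ≤ natEcc (graph n s) v := Nat.cast_nonneg _
    linarith
  · have hdev := hs v (insert b (s v))
    rw [cost, cost, Function.update_self] at hdev
    set G := graph n s with hG
    set G' := graph n (Function.update s v (insert b (s v))) with hG'
    have h1 : (ecc G' v : ℝ≥0∞) ≤ ((natEcc G b : ℕ∞) : ℝ≥0∞) + 1 := by
      have := ecc_update_le (s := s) hc hvb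
      calc (ecc G' v : ℝ≥0∞) ≤ (((natEcc G b : ℕ∞) + 1 : ℕ∞) : ℝ≥0∞) := by
            exact_mod_cast this
      _ = ((natEcc G b : ℕ∞) : ℝ≥0∞) + 1 := by push_cast; rfl
    have h2 : (ENNReal.ofReal α) * (insert b (s v)).card ≤
        (ENNReal.ofReal α) * (s v).card + ENNReal.ofReal α := by
      have hcard : ((insert b (s v)).card : ℝ≥0∞) ≤ ((s v).card : ℝ≥0∞) + 1 := by
        exact_mod_cast Finset.card_insert_le b (s v)
      calc (ENNReal.ofReal α) * (insert b (s v)).card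
          ≤ (ENNReal.ofReal α) * (((s v).card : ℝ≥0∞) + 1) := by gcongr
      _ = (ENNReal.ofReal α) * (s v).card + ENNReal.ofReal α := by ring
    have hchain : (ENNReal.ofReal α) * (s v).card + (ecc G v : ℝ≥0∞) ≤
        (ENNReal.ofReal α) * (s v).card +
          (ENNReal.ofReal α + ((natEcc G b : ℕ∞) : ℝ≥0∞) + 1) := by
      calc (ENNReal.ofReal α) * (s v).card + (ecc G v : ℝ≥0∞) ≤
          (ENNReal.ofReal α) * (insert b (s v)).card + (ecc G' v : ℝ≥0∞) := hdev
      _ ≤ ((ENNReal.ofReal α) * (s v).card + ENNReal.ofReal α) +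
            (((natEcc G b : ℕ∞) : ℝ≥0∞) + 1) := add_le_add h2 h1
      _ = (ENNReal.ofReal α) * (s v).card +
            (ENNReal.ofReal α + ((natEcc G b : ℕ∞) : ℝ≥0∞) + 1) := by ring
    have hfin : (ENNReal.ofReal α) * ((s v).card : ℝ≥0∞) ≠ ⊤ := by
      exact ENNReal.mul_ne_top ENNReal.ofReal_ne_top (ENNReal.natCast_ne_top _)
    have hle := (ENNReal.add_le_add_iff_left hfin).1 hchain
    rw [ecc_eq_natEcc hc] at hle
    have hRfin : (ENNReal.ofReal α + ((natEcc G b : ℕ∞) : ℝ≥0∞) + 1) ≠ ⊤ := by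
      refine ENNReal.add_ne_top.2 ⟨ENNReal.add_ne_top.2 ⟨ENNReal.ofReal_ne_top, ?_⟩, ENNReal.one_ne_top⟩
      simp
    have := ENNReal.toReal_mono hRfin hle
    simpa [ENNReal.toReal_add, ENNReal.add_ne_top, ENNReal.toReal_ofReal hα0] using this

end NCG
namespace NCG
open Finset SimpleGraph

variable {n : ℕ} {s : Fin n → Finset (Fin n)} {α : ℝ}

lemma graph_erase_eq {v u : Fin n} (h : v ∈ s u ∨ u = v) :
    graph n (Function.update s v ((s v).erase u)) = graph n s := by
  ext x y
  rw [graph_adj, graph_adj]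
  constructor
  · rintro ⟨hxy, hm⟩
    refine ⟨hxy, hm.imp (fun hx => ?_) (fun hy => ?_)⟩
    · by_cases hxv : x = v
      · subst hxv
        rw [Function.update_self] at hx
        exact Finset.mem_of_mem_erase hx
      · rwa [Function.update_of_ne hxv] at hx
    · by_cases hyv : y = v
      · subst hyv
        rw [Function.update_self] at hy
        exact Finset.mem_of_mem_erase hy
      · rwa [Function.update_of_ne hyv] at hy
  · rintro ⟨hxy, hm⟩
    refine ⟨hxy, ?_⟩
    by_cases hxv : x = v
    · subst hxv
      by_cases hyu : y = u
      · subst hyu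
        rcases h with h | h
        · exact Or.inr (by rwa [Function.update_of_ne (Ne.symm hxy)])
        · exact absurd h.symm hxy
      · rcases hm with hm | hm
        · exact Or.inl (by rw [Function.update_self]; exact Finset.mem_erase_of_ne_of_mem hyu hm)
        · by_cases hyv : y = x
          · subst hyv; exact absurd rfl hxy
          · exact Or.inr (by rwa [Function.update_of_ne hyv])
    · by_cases hyv : y = v
      · subst hyv
        rcases hm with hm | hm
        · exact Or.inl (by rwa [Function.update_of_ne hxv])
        · by_cases hxu : x = u
          · subst hxu
            rcases h with h | h
            · exact Or.inl (by rwa [Function.update_of_ne hxv])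
            · exact absurd h hxv
          · exact Or.inr (by rw [Function.update_self]; exact Finset.mem_erase_of_ne_of_mem hxu hm)
      · rw [Function.update_of_ne hxv, Function.update_of_ne hyv]
        exact hm

lemma eccG_ne_top {v : Fin n} (hc : (graph n s).Connected) :
    (ecc (graph n s) v : ℝ≥0∞) ≠ ⊤ := by
  rw [ecc_eq_natEcc hc]
  simp

lemma no_redundant_purchase (hs : IsEquilibrium α s) (hα0 : 0 < α)
    (hc : (graph n s).Connected) {v u : Fin n} (hu : u ∈ s v) (h : v ∈ s u ∨ u = v) :
    False := by
  have hdev := hs v ((s v).erase u)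
  rw [cost, cost, Function.update_self, graph_erase_eq h] at hdev
  have hcard : ((s v).erase u).card + 1 = (s v).card := Finset.card_erase_add_one hu
  have hlt : (ENNReal.ofReal α) * (((s v).erase u).card : ℝ≥0∞) + (ecc (graph n s) v : ℝ≥0∞)
      < (ENNReal.ofReal α) * ((s v).card : ℝ≥0∞) + (ecc (graph n s) v : ℝ≥0∞) := by
    apply ENNReal.add_lt_add_right (eccG_ne_top hc)
    rw [ENNReal.mul_lt_mul_iff_right (by simp [hα0]) ENNReal.ofReal_ne_top]
    exact_mod_cast (by omega : ((s v).erase u).card < (s v).card)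
  exact absurd hdev (not_le.2 hlt)

lemma sum_card_le (hs : IsEquilibrium α s) (hα0 : 0 < α)
    (hG : (graph n s).IsTree) : ∑ v, (s v).card ≤ n - 1 := by
  classical
  have hc := hG.isConnected
  have hinj : ((univ : Finset (Fin n)).sigma s).card ≤ (graph n s).edgeFinset.card := by
    apply Finset.card_le_card_of_injOn (fun p => s(p.1, p.2))
    · intro p hp
      rw [Finset.mem_coe, Finset.mem_sigma] at hp
      rw [Finset.mem_coe, SimpleGraph.mem_edgeFinset, SimpleGraph.mem_edgeSet, graph_adj]
      refine ⟨fun h => no_redundant_purchase hs hα0 hc hp.2 (Or.inr h.symm), Or.inl hp.2⟩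
    · intro p hp q hq hpq
      rw [Finset.mem_coe, Finset.mem_sigma] at hp hq
      rw [Sym2.eq_iff] at hpq
      rcases hpq with ⟨h1, h2⟩ | ⟨h1, h2⟩
      · exact Sigma.ext h1 (heq_of_eq h2)
      · exfalso
        exact no_redundant_purchase hs hα0 hc hp.2 (Or.inl (h1 ▸ h2 ▸ hq.2))
  rw [Finset.card_sigma] at hinj
  have hcard := hG.card_edgeFinset
  rw [Fintype.card_fin] at hcard
  omega

end NCG
namespace NCG
open Finset SimpleGraph

variable {n : ℕ} {t : Fin n → Finset (Fin n)}

lemma card_pairs_eq (t : Fin n → Finset (Fin n)) :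
    #(univ.filter fun p : Fin n × Fin n => p.2 ∈ t p.1) = ∑ v, (t v).card := by
  classical
  rw [Finset.card_filter, ← Finset.univ_product_univ, Finset.sum_product]
  refine Finset.sum_congr rfl fun v _ => ?_
  simp

lemma card_pairs_eq' (t : Fin n → Finset (Fin n)) :
    #(univ.filter fun p : Fin n × Fin n => p.1 ∈ t p.2) = ∑ v, (t v).card := by
  classical
  rw [Finset.card_filter, ← Finset.univ_product_univ, Finset.sum_product_right]
  refine Finset.sum_congr rfl fun v _ => ?_
  simp

lemma edge_le_sum_card [DecidableRel (graph n t).Adj] :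
    #(graph n t).edgeFinset ≤ ∑ v, (t v).card := by
  classical
  have h2 := SimpleGraph.two_mul_card_edgeFinset (G := graph n t)
  have hsub : (univ.filter fun (p : Fin n × Fin n) => (graph n t).Adj p.1 p.2) ⊆
      (univ.filter fun p : Fin n × Fin n => p.2 ∈ t p.1) ∪
      (univ.filter fun p : Fin n × Fin n => p.1 ∈ t p.2) := by
    intro p hp
    rw [Finset.mem_filter] at hp
    rw [graph_adj] at hp
    rw [Finset.mem_union, Finset.mem_filter, Finset.mem_filter]
    rcases hp.2.2 with h | h
    · exact Or.inl ⟨mem_univ _, h⟩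
    · exact Or.inr ⟨mem_univ _, h⟩
  have hle := Finset.card_le_card hsub
  have hun := Finset.card_union_le
    (univ.filter fun p : Fin n × Fin n => p.2 ∈ t p.1)
    (univ.filter fun p : Fin n × Fin n => p.1 ∈ t p.2)
  rw [card_pairs_eq, card_pairs_eq'] at hun
  have : #(univ.filter fun (p : Fin n × Fin n) => (graph n t).Adj p.1 p.2)
      = 2 * #(graph n t).edgeFinset := by
    rw [h2]
  omega

lemma card_edge_ge {G : SimpleGraph (Fin n)} [DecidableRel G.Adj] (hn : 1 ≤ n)
    (hc : G.Connected) : n - 1 ≤ #G.edgeFinset := by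
  classical
  set b0 : Fin n := ⟨0, by omega⟩
  have H : ∀ v : Fin n, v ≠ b0 → ∃ u, G.Adj v u ∧ G.dist u b0 < G.dist v b0 := by
    intro v hv
    obtain ⟨p, hp⟩ := (hc v b0).exists_walk_length_eq_dist
    cases p with
    | nil => exact absurd rfl hv
    | @cons _ u _ h q =>
      refine ⟨u, h, ?_⟩
      have hq : G.dist u b0 ≤ q.length := SimpleGraph.dist_le q
      rw [SimpleGraph.Walk.length_cons] at hp
      omega
  choose! f h1 h2 using H
  have hinj : #(univ.erase b0) ≤ #G.edgeFinset := by
    apply Finset.card_le_card_of_injOn (fun v => s(v, f v))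
    · intro v hv
      rw [Finset.mem_coe, Finset.mem_erase] at hv
      rw [Finset.mem_coe, SimpleGraph.mem_edgeFinset, SimpleGraph.mem_edgeSet]
      exact h1 v hv.1
    · intro v hv w hw hvw
      rw [Finset.mem_coe, Finset.mem_erase] at hv hw
      rw [Sym2.eq_iff] at hvw
      rcases hvw with ⟨hh, -⟩ | ⟨hh1, hh2⟩
      · exact hh
      · exfalso
        have hv2 := h2 v hv.1
        have hw2 := h2 w hw.1
        rw [hh2] at hv2
        rw [← hh1] at hw2
        omega
  rw [Finset.card_erase_of_mem (mem_univ _), Finset.card_univ, Fintype.card_fin] at hinj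
  exact hinj

end NCG
namespace NCG
open Finset SimpleGraph

variable {n : ℕ} {α : ℝ}

lemma socialCost_eq (t : Fin n → Finset (Fin n)) :
    socialCost α t = ENNReal.ofReal α * ((∑ v, (t v).card : ℕ) : ℝ≥0∞) +
      ∑ v, (ecc (graph n t) v : ℝ≥0∞) := by
  rw [socialCost]
  simp_rw [cost]
  rw [Finset.sum_add_distrib, ← Finset.mul_sum]
  congr 2
  simp

lemma real_opt {n k : ℕ} {α E : ℝ} (hn : 3 ≤ n) (hα0 : 0 < α)
    (hα2 : 2 ≤ α * ((n:ℝ) - 2)) (hkn : k ≤ n)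
    (hEr : (n:ℝ) - 1 ≤ E)
    (h2Er : (k:ℝ) * ((n:ℝ) - 1) + ((n:ℝ) - (k:ℝ)) * (k:ℝ) ≤ 2 * E) :
    α * ((n:ℝ) - 1) + (2 * (n:ℝ) - 1) ≤ α * E + ((k:ℝ) + 2 * ((n:ℝ) - (k:ℝ))) := by
  have hkr : (k:ℝ) ≤ (n:ℝ) := by exact_mod_cast hkn
  have hnr : (3:ℝ) ≤ (n:ℝ) := by exact_mod_cast hn
  rcases Nat.eq_zero_or_pos k with hk0 | hk1
  · have hk : (k:ℝ) = 0 := by exact_mod_cast hk0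
    rw [hk]
    nlinarith [mul_nonneg hα0.le (sub_nonneg.2 hEr)]
  · have hk1r : (1:ℝ) ≤ (k:ℝ) := by exact_mod_cast hk1
    have key : 0 ≤ ((n:ℝ) - 2) * (α * E - α * ((n:ℝ) - 1) - (k:ℝ) + 1) := by
      nlinarith [mul_nonneg (sub_nonneg.2 hα2) (sub_nonneg.2 hEr),
        mul_nonneg (sub_nonneg.2 hk1r) (sub_nonneg.2 hkr)]
    have hpos : (0:ℝ) < (n:ℝ) - 2 := by linarith
    have := (mul_nonneg_iff_of_pos_left hpos).1 key
    linarith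

lemma opt_lower (hn : 3 ≤ n) (hα : 2 / ((n : ℝ) - 2) ≤ α)
    (t : Fin n → Finset (Fin n)) :
    ENNReal.ofReal (α * ((n:ℝ) - 1) + (2 * (n:ℝ) - 1)) ≤ socialCost α t := by
  classical
  have hn2 : (1:ℝ) ≤ (n:ℝ) - 2 := by
    have : (3:ℝ) ≤ (n:ℝ) := by exact_mod_cast hn
    linarith
  have hα0 : 0 < α := lt_of_lt_of_le (by positivity) hα
  have hα2 : 2 ≤ α * ((n:ℝ) - 2) := by
    rw [div_le_iff₀ (by linarith)] at hα
    linarith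
  set G := graph n t with hGdef
  by_cases hconn : G.Connected
  · -- connected case
    set K := univ.filter (fun v : Fin n => ∀ u, u ≠ v → G.Adj v u) with hK
    set NK := univ.filter (fun v : Fin n => ¬ ∀ u, u ≠ v → G.Adj v u) with hNK
    set k := #K with hk
    have hkn : k ≤ n := by
      calc k ≤ #(univ : Finset (Fin n)) := Finset.card_le_card (Finset.filter_subset _ _)
      _ = n := by rw [Finset.card_univ, Fintype.card_fin]
    have hcards : #K + #NK = n := by
      rw [hK, hNK, Finset.card_filter_add_card_filter_not, Finset.card_univ,
        Fintype.card_fin]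
    -- degree facts
    have hdegK : ∀ v ∈ K, G.degree v = n - 1 := by
      intro v hv
      rw [hK, Finset.mem_filter] at hv
      rw [← SimpleGraph.card_neighborFinset_eq_degree]
      have : G.neighborFinset v = univ.erase v := by
        ext u
        rw [SimpleGraph.mem_neighborFinset, Finset.mem_erase]
        constructor
        · intro h; exact ⟨h.ne', mem_univ _⟩
        · intro h; exact hv.2 u h.1
      rw [this, Finset.card_erase_of_mem (mem_univ _), Finset.card_univ, Fintype.card_fin]
    have hdegNK : ∀ v ∈ NK, k ≤ G.degree v := by
      intro v hv
      rw [hNK, Finset.mem_filter] at hv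
      rw [← SimpleGraph.card_neighborFinset_eq_degree]
      apply Finset.card_le_card
      intro u hu
      rw [hK, Finset.mem_filter] at hu
      rw [SimpleGraph.mem_neighborFinset]
      have hne : v ≠ u := by
        rintro rfl
        exact hv.2 hu.2
      exact (hu.2 v hne).symm
    -- handshake
    have hhand := SimpleGraph.sum_degrees_eq_twice_card_edges G
    have hsplitdeg : ∑ v, G.degree v = ∑ v ∈ K, G.degree v + ∑ v ∈ NK, G.degree v := by
      rw [hK, hNK]
      exact (Finset.sum_filter_add_sum_filter_not _ _ _).symm
    have hsumK : ∑ v ∈ K, G.degree v = k * (n - 1) := by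
      rw [Finset.sum_congr rfl hdegK, Finset.sum_const, smul_eq_mul]
    have hsumNK : (n - k) * k ≤ ∑ v ∈ NK, G.degree v := by
      have := Finset.card_nsmul_le_sum NK (fun v => G.degree v) k hdegNK
      rwa [smul_eq_mul, show #NK = n - k by omega] at this
    have hE2 : k * (n - 1) + (n - k) * k ≤ 2 * #G.edgeFinset := by omega
    have hE1 : n - 1 ≤ #G.edgeFinset := card_edge_ge (by omega) hconn
    have hEsum : #G.edgeFinset ≤ ∑ v, (t v).card := edge_le_sum_card
    -- eccentricity lower bounds
    have hecc1 : ∀ v ∈ K, (1:ℝ≥0∞) ≤ (ecc G v : ℝ≥0∞) := by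
      intro v _
      have h2 : ∃ u : Fin n, u ≠ v := by
        rcases eq_or_ne v ⟨0, by omega⟩ with rfl | h
        · exact ⟨⟨1, by omega⟩, by simp [Fin.ext_iff]⟩
        · exact ⟨⟨0, by omega⟩, Ne.symm h⟩
      obtain ⟨u, hu⟩ := h2
      have : (1:ℕ∞) ≤ G.edist v u := by
        rw [Order.one_le_iff_pos]
        exact SimpleGraph.edist_pos_of_ne (Ne.symm hu)
      have h3 : (1:ℕ∞) ≤ ecc G v := le_trans this (le_iSup _ u)
      exact_mod_cast h3
    have hecc2 : ∀ v ∈ NK, (2:ℝ≥0∞) ≤ (ecc G v : ℝ≥0∞) := by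
      intro v hv
      rw [hNK, Finset.mem_filter] at hv
      have := hv.2
      push_neg at this
      obtain ⟨u, hu1, hu2⟩ := this
      have hd0 : G.dist v u ≠ 0 := fun h => hu1 ((hconn.dist_eq_zero_iff.1 h).symm)
      have hd1 : G.dist v u ≠ 1 := fun h => hu2 (SimpleGraph.dist_eq_one_iff_adj.1 h)
      have hd2 : 2 ≤ G.dist v u := by omega
      have : (2:ℕ∞) ≤ G.edist v u := by
        rw [edist_eq_dist' (hconn v u)]
        exact_mod_cast hd2
      have h3 : (2:ℕ∞) ≤ ecc G v := le_trans this (le_iSup _ u)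
      exact_mod_cast h3
    -- sum of eccentricities
    have heccsum : ((k : ℝ≥0∞) + 2 * ((n - k : ℕ) : ℝ≥0∞)) ≤ ∑ v, (ecc G v : ℝ≥0∞) := by
      have hsplit : ∑ v, (ecc G v : ℝ≥0∞) =
          ∑ v ∈ K, (ecc G v : ℝ≥0∞) + ∑ v ∈ NK, (ecc G v : ℝ≥0∞) := by
        rw [hK, hNK]
        exact (Finset.sum_filter_add_sum_filter_not _ _ _).symm
      rw [hsplit]
      apply add_le_add
      · calc (k : ℝ≥0∞) = ∑ _v ∈ K, (1:ℝ≥0∞) := by rw [Finset.sum_const, nsmul_eq_mul, mul_one]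
        _ ≤ ∑ v ∈ K, (ecc G v : ℝ≥0∞) := Finset.sum_le_sum hecc1
      · calc 2 * ((n - k : ℕ) : ℝ≥0∞) = ∑ _v ∈ NK, (2:ℝ≥0∞) := by
              rw [Finset.sum_const, show #NK = n - k by omega, nsmul_eq_mul, mul_comm]
        _ ≤ ∑ v ∈ NK, (ecc G v : ℝ≥0∞) := Finset.sum_le_sum hecc2
    -- assemble
    rw [socialCost_eq]
    have hstep1 : ENNReal.ofReal α * ((#G.edgeFinset : ℕ) : ℝ≥0∞) +
        ((k : ℝ≥0∞) + 2 * ((n - k : ℕ) : ℝ≥0∞)) ≤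
        ENNReal.ofReal α * ((∑ v, (t v).card : ℕ) : ℝ≥0∞) + ∑ v, (ecc (graph n t) v : ℝ≥0∞) := by
      apply add_le_add _ heccsum
      gcongr ENNReal.ofReal α * ?_
      exact_mod_cast hEsum
    refine le_trans ?_ hstep1
    -- now a real-number inequality
    have hcollapse : ENNReal.ofReal α * ((#G.edgeFinset : ℕ) : ℝ≥0∞) +
        ((k : ℝ≥0∞) + 2 * ((n - k : ℕ) : ℝ≥0∞)) =
        ENNReal.ofReal (α * (#G.edgeFinset : ℝ) + ((k : ℝ) + 2 * ((n - k : ℕ) : ℝ))) := by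
      rw [ENNReal.ofReal_add (by positivity) (by positivity)]
      congr 1
      · rw [ENNReal.ofReal_mul hα0.le, ENNReal.ofReal_natCast]
      · rw [ENNReal.ofReal_add (by positivity) (by positivity), ENNReal.ofReal_natCast,
          ENNReal.ofReal_mul (by norm_num), ENNReal.ofReal_natCast]
        norm_num
    rw [hcollapse]
    apply ENNReal.ofReal_le_ofReal
    -- final real arithmetic
    have hEr : (n:ℝ) - 1 ≤ (#G.edgeFinset : ℝ) := by
      have h : ((n - 1 : ℕ) : ℝ) ≤ (#G.edgeFinset : ℝ) := by exact_mod_cast hE1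
      rwa [Nat.cast_sub (by omega), Nat.cast_one] at h
    have h2Er : (k:ℝ) * ((n:ℝ) - 1) + ((n:ℝ) - (k:ℝ)) * (k:ℝ) ≤ 2 * (#G.edgeFinset : ℝ) := by
      have h : ((k * (n - 1) + (n - k) * k : ℕ) : ℝ) ≤ 2 * (#G.edgeFinset : ℝ) := by
        exact_mod_cast hE2
      push_cast [Nat.cast_sub (show 1 ≤ n by omega), Nat.cast_sub hkn] at h
      linarith
    have hnk : ((n - k : ℕ) : ℝ) = (n:ℝ) - (k:ℝ) := by
      rw [Nat.cast_sub hkn]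
    rw [hnk]
    exact real_opt hn hα0 hα2 hkn hEr h2Er
  · -- disconnected case
    have hne : Nonempty (Fin n) := ⟨⟨0, by omega⟩⟩
    have hpre : ¬ G.Preconnected := fun h => hconn { preconnected := h, nonempty := hne }
    rw [SimpleGraph.Preconnected] at hpre
    push_neg at hpre
    obtain ⟨u, v, huv⟩ := hpre
    have htop : (ecc G u : ℝ≥0∞) = ⊤ := by
      have h1 : G.edist u v = ⊤ := SimpleGraph.edist_eq_top_of_not_reachable huv
      have h2 : ecc G u = ⊤ := le_antisymm le_top (h1 ▸ le_iSup (fun w => G.edist u w) v)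
      rw [h2]
      simp
    have hcost : cost α t u = ⊤ := by
      rw [cost, htop]
      simp
    calc ENNReal.ofReal (α * ((n:ℝ) - 1) + (2 * (n:ℝ) - 1)) ≤ ⊤ := le_top
    _ = cost α t u := hcost.symm
    _ ≤ socialCost α t := Finset.single_le_sum (fun i _ => zero_le) (mem_univ u)

end NCG
open NCG
/-- for `α ≥ 2/(n−2)`, if every equilibrium graph is a tree, then
the price of anarchy is less than 3: every equilibrium has social cost less
than 3 times the optimal social cost. -/
theorem price_of_anarchy_lt_three (n : ℕ) (hn : 3 ≤ n) (α : ℝ)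
    (hα : 2 / ((n : ℝ) - 2) ≤ α)
    (htree : ∀ t : Fin n → Finset (Fin n), IsEquilibrium α t → (graph n t).IsTree) :
    ∀ s : Fin n → Finset (Fin n), IsEquilibrium α s →
      socialCost α s < 3 * ⨅ t : Fin n → Finset (Fin n), socialCost α t := by
  classical
  intro s hs
  have hG := htree s hs
  have hc : (graph n s).Connected := hG.isConnected
  have hn2 : (1:ℝ) ≤ (n:ℝ) - 2 := by
    have : (3:ℝ) ≤ (n:ℝ) := by exact_mod_cast hn
    linarith
  have hα0 : 0 < α := lt_of_lt_of_le (by positivity) hα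
  have hα2 : 2 ≤ α * ((n:ℝ) - 2) := by
    rw [div_le_iff₀ (by linarith)] at hα
    linarith
  -- center of the tree
  obtain ⟨b, hb⟩ := exists_center (by omega) hG
  set r := natEcc (graph n s) b with hr
  -- diameter realized
  obtain ⟨u0, -, hu0⟩ := Finset.exists_mem_eq_sup (Finset.univ : Finset (Fin n))
    (Finset.univ_nonempty_iff.2 hc.nonempty) (fun u => natEcc (graph n s) u)
  -- equilibrium bound : every eccentricity ≤ α + r + 1
  have hC := natEcc_le_alpha hs hα0.le hc b u0
  have hra : (r:ℝ) ≤ α + 2 := by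
    have h2r : 2 * r ≤ (Finset.univ.sup fun u => natEcc (graph n s) u) + 1 := hb
    rw [hu0] at h2r
    have h2r' : 2 * (r:ℝ) ≤ (natEcc (graph n s) u0 : ℝ) + 1 := by exact_mod_cast h2r
    linarith
  have hrn : r < n := natEcc_lt_card hc b
  have hcard := sum_card_le hs hα0 hG
  have hecc2r : ∀ v, natEcc (graph n s) v ≤ 2 * r := by
    intro v
    apply natEcc_le
    intro u
    calc (graph n s).dist v u ≤ (graph n s).dist v b + (graph n s).dist b u :=
          hc.dist_triangle
    _ ≤ r + r := by
        apply add_le_add _ (dist_le_natEcc b u)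
        rw [SimpleGraph.dist_comm]
        exact dist_le_natEcc b v
    _ = 2 * r := (two_mul r).symm
  -- upper bound on the social cost of `s`
  have hup : socialCost α s ≤
      ENNReal.ofReal (α * ((n - 1 : ℕ) : ℝ) + ((n * (2 * r) : ℕ) : ℝ)) := by
    rw [socialCost_eq]
    have h1 : ENNReal.ofReal α * ((∑ v, (s v).card : ℕ) : ℝ≥0∞) ≤
        ENNReal.ofReal α * (((n - 1 : ℕ) : ℕ) : ℝ≥0∞) := by
      gcongr ENNReal.ofReal α * ?_
      exact_mod_cast hcard
    have h2 : ∑ v, (ecc (graph n s) v : ℝ≥0∞) ≤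
        ∑ _v : Fin n, (((2 * r : ℕ) : ℕ) : ℝ≥0∞) := by
      apply Finset.sum_le_sum
      intro v _
      rw [ecc_eq_natEcc hc]
      exact_mod_cast hecc2r v
    calc ENNReal.ofReal α * ((∑ v, (s v).card : ℕ) : ℝ≥0∞) + ∑ v, (ecc (graph n s) v : ℝ≥0∞)
        ≤ ENNReal.ofReal α * (((n - 1 : ℕ) : ℕ) : ℝ≥0∞) +
          ∑ _v : Fin n, (((2 * r : ℕ) : ℕ) : ℝ≥0∞) := add_le_add h1 h2
    _ = ENNReal.ofReal α * (((n - 1 : ℕ) : ℕ) : ℝ≥0∞) + (((n * (2 * r) : ℕ) : ℕ) : ℝ≥0∞) := by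
        rw [Finset.sum_const, Finset.card_univ, Fintype.card_fin, nsmul_eq_mul]
        norm_cast
    _ = ENNReal.ofReal (α * ((n - 1 : ℕ) : ℝ) + ((n * (2 * r) : ℕ) : ℝ)) := by
        rw [ENNReal.ofReal_add (by positivity) (by positivity),
          ENNReal.ofReal_mul hα0.le, ENNReal.ofReal_natCast, ENNReal.ofReal_natCast]
  -- the strict real inequality
  have hlt : α * ((n - 1 : ℕ) : ℝ) + ((n * (2 * r) : ℕ) : ℝ) <
      3 * (α * ((n:ℝ) - 1) + (2 * (n:ℝ) - 1)) := by
    have hrn' : (r:ℝ) ≤ (n:ℝ) - 1 := by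
      have : (r:ℝ) < (n:ℝ) := by exact_mod_cast hrn
      have hr1 : ((r:ℝ) + 1) ≤ (n:ℝ) := by exact_mod_cast hrn
      linarith
    push_cast [Nat.cast_sub (show 1 ≤ n by omega)]
    have hfact : 0 ≤ (α + 2 - (r:ℝ)) * ((n:ℝ) - 1) :=
      mul_nonneg (by linarith) (by linarith)
    nlinarith [hfact]
  -- lower bound on the optimum
  have hinf : ENNReal.ofReal (α * ((n:ℝ) - 1) + (2 * (n:ℝ) - 1)) ≤
      ⨅ t : Fin n → Finset (Fin n), socialCost α t :=
    le_iInf (opt_lower hn hα)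
  have hstrict : ENNReal.ofReal (α * ((n - 1 : ℕ) : ℝ) + ((n * (2 * r) : ℕ) : ℝ)) <
      ENNReal.ofReal (3 * (α * ((n:ℝ) - 1) + (2 * (n:ℝ) - 1))) := by
    rw [ENNReal.ofReal_lt_ofReal_iff (by nlinarith [hlt])]
    exact hlt
  calc socialCost α s ≤ _ := hup
  _ < ENNReal.ofReal (3 * (α * ((n:ℝ) - 1) + (2 * (n:ℝ) - 1))) := hstrict
  _ = 3 * ENNReal.ofReal (α * ((n:ℝ) - 1) + (2 * (n:ℝ) - 1)) := by
      rw [ENNReal.ofReal_mul (by norm_num)]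
      norm_num
  _ ≤ 3 * ⨅ t : Fin n → Finset (Fin n), socialCost α t := by
      exact mul_le_mul_right hinf 3
end
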